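/- Let c^i_{jk} (i,j,k = 1,…,n) be real numbers symmetric in (j,k) and associative, i.e. c^i_{jm} c^m_{kl} = c^i_{km} c^m_{jl} (sum over repeated indices). Let X_α ∈ ℝ^n (α in a finite index set) and ε_α ∈ {+1,−1}, and define R^{sk}_{mi} = Σ_α ε_α (c^s_{ml} c^k_{iq} − c^s_{il} c^k_{mq}) X_α^l X_α^q. Then R^{sk}_{mi} c^n_{pk} + R^{sk}_{ip} c^n_{mk} + R^{sk}_{pm} c^n_{ik} = 0 for all indices s, n, m, i, p. -/
import Mathlib

open scoped BigOperators

theorem statement_17 {n : ℕ} {α : Type*} [Fintype α]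
    (c : Fin n → Fin n → Fin n → ℝ)
    (hcomm : ∀ i j k, c i j k = c i k j)
    (hassoc : ∀ i j k l, ∑ m, c i j m * c m k l = ∑ m, c i k m * c m j l)
    (X : α → Fin n → ℝ) (ε : α → ℝ) (hε : ∀ a, ε a = 1 ∨ ε a = -1)
    (R : Fin n → Fin n → Fin n → Fin n → ℝ)
    (hR : ∀ s k m i, R s k m i =
      ∑ a : α, ε a * ∑ l, ∑ q, (c s m l * c k i q - c s i l * c k m q) * X a l * X a q) :
    ∀ s p m i q,
      ∑ k, (R s k m i * c p q k + R s k i q * c p m k + R s k q m * c p i k) = 0 := by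
  intro s p m i q
  have key : ∀ (Y : Fin n → ℝ) (x y : Fin n),
      (∑ k, c p x k * ∑ l, c k y l * Y l) = ∑ k, c p y k * ∑ l, c k x l * Y l := by
    intro Y x y
    simp_rw [Finset.mul_sum]
    rw [Finset.sum_comm]
    conv_rhs => rw [Finset.sum_comm]
    refine Finset.sum_congr rfl fun l _ => ?_
    simp_rw [← mul_assoc, ← Finset.sum_mul]
    rw [hassoc p x y l]
  have hR' : ∀ k m i, R s k m i = ∑ a, ε a *
      ((∑ l, c s m l * X a l) * (∑ l, c k i l * X a l) -
       (∑ l, c s i l * X a l) * (∑ l, c k m l * X a l)) := by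
    intro k m' i'
    rw [hR]
    refine Finset.sum_congr rfl fun a _ => ?_
    congr 1
    rw [Finset.sum_mul_sum, Finset.sum_mul_sum, ← Finset.sum_sub_distrib]
    refine Finset.sum_congr rfl fun l _ => ?_
    rw [← Finset.sum_sub_distrib]
    refine Finset.sum_congr rfl fun q' _ => ?_
    ring
  have split : ∀ (f g h : α → ℝ) (b1 b2 b3 : ℝ),
      (∑ a, f a) * b1 + (∑ a, g a) * b2 + (∑ a, h a) * b3 =
        ∑ a, (f a * b1 + g a * b2 + h a * b3) := by
    intros f g h b1 b2 b3
    simp [Finset.sum_mul, Finset.sum_add_distrib]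
  simp_rw [hR', split]
  rw [Finset.sum_comm]
  refine Finset.sum_eq_zero fun a _ => ?_
  have hB := fun x y => key (X a) x y
  have reorg : ∀ k : Fin n,
      (ε a * ((∑ l, c s m l * X a l) * (∑ l, c k i l * X a l) -
        (∑ l, c s i l * X a l) * (∑ l, c k m l * X a l)) * c p q k
       + ε a * ((∑ l, c s i l * X a l) * (∑ l, c k q l * X a l) -
        (∑ l, c s q l * X a l) * (∑ l, c k i l * X a l)) * c p m k
       + ε a * ((∑ l, c s q l * X a l) * (∑ l, c k m l * X a l) -
        (∑ l, c s m l * X a l) * (∑ l, c k q l * X a l)) * c p i k)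
      = (ε a * (∑ l, c s m l * X a l)) * (c p q k * ∑ l, c k i l * X a l)
        - (ε a * (∑ l, c s m l * X a l)) * (c p i k * ∑ l, c k q l * X a l)
        + ((ε a * (∑ l, c s i l * X a l)) * (c p m k * ∑ l, c k q l * X a l)
        - (ε a * (∑ l, c s i l * X a l)) * (c p q k * ∑ l, c k m l * X a l))
        + ((ε a * (∑ l, c s q l * X a l)) * (c p i k * ∑ l, c k m l * X a l)
        - (ε a * (∑ l, c s q l * X a l)) * (c p m k * ∑ l, c k i l * X a l)) := fun k => by ring
  rw [Finset.sum_congr rfl fun k _ => reorg k]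
  simp only [Finset.sum_add_distrib, Finset.sum_sub_distrib, ← Finset.mul_sum]
  rw [hB q i, hB m q, hB i m]
  ring
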